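/- Let A be a Hopf algebra and R ⊆ ker ε a right ideal. Define 𝓡̂ = {a ∈ ker ε : (X ⊗ id)(ad(a)) = 0 for all X ∈ L}, where L is a fixed set of ε-derivations X : A → ℂ and ad(a) = Σ a⁽²⁾ ⊗ κ(a⁽¹⁾)a⁽³⁾. Then 𝓡̂ is a right ideal of A contained in ker ε. -/

import Mathlib

open TensorProduct

/-- The adjoint coaction `ad : A → A ⊗ A`, `ad(a) = Σ a⁽²⁾ ⊗ κ(a⁽¹⁾)a⁽³⁾`. -/
noncomputable def adjointCoaction (A : Type*) [Ring A] [HopfAlgebra ℂ A] :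
    A →ₗ[ℂ] A ⊗[ℂ] A :=
  (TensorProduct.map LinearMap.id (LinearMap.mul' ℂ A))
    ∘ₗ (TensorProduct.assoc ℂ A A A).toLinearMap
    ∘ₗ (TensorProduct.map
          ((TensorProduct.comm ℂ A A).toLinearMap
            ∘ₗ (TensorProduct.map (HopfAlgebra.antipode (R := ℂ)) LinearMap.id))
          LinearMap.id)
    ∘ₗ (TensorProduct.map (Coalgebra.comul (R := ℂ)) LinearMap.id)
    ∘ₗ (Coalgebra.comul (R := ℂ))

/-- An ε-derivation: a linear functional with `X(ab) = ε(a)X(b) + ε(b)X(a)`. -/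
def IsEpsDerivation {A : Type*} [Ring A] [HopfAlgebra ℂ A] (X : A →ₗ[ℂ] ℂ) : Prop :=
  ∀ a b : A, X (a * b) =
    Coalgebra.counit (R := ℂ) a * X b + Coalgebra.counit (R := ℂ) b * X a

open Coalgebra HopfAlgebra
set_option maxHeartbeats 2000000

section Aux

variable {A : Type*} [Ring A] [HopfAlgebra ℂ A]

local notation "ε" => Coalgebra.counit (R := ℂ)
local notation "S" => HopfAlgebra.antipode (R := ℂ) (A := A)
local notation "Δ" => Coalgebra.comul (R := ℂ)

lemma repr_smul_counit_left {c : A} {ι : Type*} (r : Coalgebra.Repr ℂ c ι) {M : Type*} [AddCommGroup M]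
    [Module ℂ M] (f : A →ₗ[ℂ] M) :
    ∑ i ∈ r.index, ε (r.left i) • f (r.right i) = f c := by
  have h := congrArg ((TensorProduct.lid ℂ M).toLinearMap ∘ₗ f.lTensor ℂ)
    (Coalgebra.sum_counit_tmul_eq r)
  simp only [map_sum, LinearMap.coe_comp, LinearEquiv.coe_coe, Function.comp_apply,
    LinearMap.lTensor_tmul, TensorProduct.lid_tmul, one_smul] at h
  exact h

lemma repr_smul_counit_right {c : A} {ι : Type*} (r : Coalgebra.Repr ℂ c ι) {M : Type*} [AddCommGroup M]
    [Module ℂ M] (f : A →ₗ[ℂ] M) :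
    ∑ i ∈ r.index, ε (r.right i) • f (r.left i) = f c := by
  have h := congrArg ((TensorProduct.rid ℂ M).toLinearMap ∘ₗ f.rTensor ℂ)
    (Coalgebra.sum_tmul_counit_eq r)
  simp only [map_sum, LinearMap.coe_comp, LinearEquiv.coe_coe, Function.comp_apply,
    LinearMap.rTensor_tmul, TensorProduct.rid_tmul, one_smul] at h
  exact h

/-- A representation of `comul (x * y)` built from representations of `comul x`, `comul y`. -/
noncomputable def mulRepr {x y : A} {ιx ιy : Type*} (rx : Coalgebra.Repr ℂ x ιx)
    (ry : Coalgebra.Repr ℂ y ιy) :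
    Coalgebra.Repr ℂ (x * y) (ιx × ιy) where
  index := rx.index ×ˢ ry.index
  left := fun p => rx.left p.1 * ry.left p.2
  right := fun p => rx.right p.1 * ry.right p.2
  eq := by
    rw [Finset.sum_product, Bialgebra.comul_mul, ← rx.eq, ← ry.eq, Finset.sum_mul_sum]
    simp [Algebra.TensorProduct.tmul_mul_tmul]

lemma coassoc_repr (a : A) :
    (∑ i ∈ (ℛ ℂ a).index, ∑ k ∈ (ℛ ℂ ((ℛ ℂ a).right i)).index,
      (ℛ ℂ a).left i ⊗ₜ[ℂ]
        ((ℛ ℂ ((ℛ ℂ a).right i)).left k ⊗ₜ[ℂ] (ℛ ℂ ((ℛ ℂ a).right i)).right k))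
    = ∑ i ∈ (ℛ ℂ a).index, ∑ m ∈ (ℛ ℂ ((ℛ ℂ a).left i)).index,
      (ℛ ℂ ((ℛ ℂ a).left i)).left m ⊗ₜ[ℂ]
        ((ℛ ℂ ((ℛ ℂ a).left i)).right m ⊗ₜ[ℂ] (ℛ ℂ a).right i) := by
  have hL : (∑ i ∈ (ℛ ℂ a).index, ∑ k ∈ (ℛ ℂ ((ℛ ℂ a).right i)).index,
      (ℛ ℂ a).left i ⊗ₜ[ℂ]
        ((ℛ ℂ ((ℛ ℂ a).right i)).left k ⊗ₜ[ℂ] (ℛ ℂ ((ℛ ℂ a).right i)).right k))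
      = (Coalgebra.comul (R := ℂ) (A := A)).lTensor A (Δ a) := by
    conv_rhs => rw [← (ℛ ℂ a).eq]
    rw [map_sum]
    refine Finset.sum_congr rfl fun i _ => ?_
    rw [LinearMap.lTensor_tmul, ← (ℛ ℂ ((ℛ ℂ a).right i)).eq, tmul_sum]
  have hR : (∑ i ∈ (ℛ ℂ a).index, ∑ m ∈ (ℛ ℂ ((ℛ ℂ a).left i)).index,
      (ℛ ℂ ((ℛ ℂ a).left i)).left m ⊗ₜ[ℂ]
        ((ℛ ℂ ((ℛ ℂ a).left i)).right m ⊗ₜ[ℂ] (ℛ ℂ a).right i))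
      = (TensorProduct.assoc ℂ A A A).toLinearMap
          ((Coalgebra.comul (R := ℂ) (A := A)).rTensor A (Δ a)) := by
    conv_rhs => rw [← (ℛ ℂ a).eq]
    rw [map_sum, map_sum]
    refine Finset.sum_congr rfl fun i _ => ?_
    rw [LinearMap.rTensor_tmul, ← (ℛ ℂ ((ℛ ℂ a).left i)).eq, sum_tmul, map_sum]
    exact Finset.sum_congr rfl fun m _ => rfl
  rw [hL, hR]
  exact (Coalgebra.coassoc_apply a).symm

lemma prod_counit_collapse {x y : A} {M : Type*} [AddCommGroup M] [Module ℂ M]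
    (f : A →ₗ[ℂ] M) :
    (∑ i ∈ (ℛ ℂ x).index, ∑ j ∈ (ℛ ℂ y).index,
      ε ((ℛ ℂ x).right i * (ℛ ℂ y).right j) • f ((ℛ ℂ x).left i * (ℛ ℂ y).left j))
    = f (x * y) := by
  have h2 : ∑ p ∈ (ℛ ℂ x).index ×ˢ (ℛ ℂ y).index,
      ε ((ℛ ℂ x).right p.1 * (ℛ ℂ y).right p.2) • f ((ℛ ℂ x).left p.1 * (ℛ ℂ y).left p.2)
      = f (x * y) := repr_smul_counit_right (mulRepr (ℛ ℂ x) (ℛ ℂ y)) f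
  calc (∑ i ∈ (ℛ ℂ x).index, ∑ j ∈ (ℛ ℂ y).index,
        ε ((ℛ ℂ x).right i * (ℛ ℂ y).right j) • f ((ℛ ℂ x).left i * (ℛ ℂ y).left j))
      = ∑ p ∈ (ℛ ℂ x).index ×ˢ (ℛ ℂ y).index,
        ε ((ℛ ℂ x).right p.1 * (ℛ ℂ y).right p.2) • f ((ℛ ℂ x).left p.1 * (ℛ ℂ y).left p.2) :=
        (Finset.sum_product (ℛ ℂ x).index (ℛ ℂ y).index (fun p =>
          ε ((ℛ ℂ x).right p.1 * (ℛ ℂ y).right p.2) •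
            f ((ℛ ℂ x).left p.1 * (ℛ ℂ y).left p.2))).symm
    _ = f (x * y) := h2

lemma prod_antipode_collapse (x y : A) :
    (∑ m ∈ (ℛ ℂ x).index, ∑ n ∈ (ℛ ℂ y).index,
      S ((ℛ ℂ x).left m * (ℛ ℂ y).left n) * ((ℛ ℂ x).right m * (ℛ ℂ y).right n))
    = (ε x * ε y) • (1 : A) := by
  have h2 : ∑ p ∈ (ℛ ℂ x).index ×ˢ (ℛ ℂ y).index,
      S ((ℛ ℂ x).left p.1 * (ℛ ℂ y).left p.2) * ((ℛ ℂ x).right p.1 * (ℛ ℂ y).right p.2)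
      = ε (x * y) • (1 : A) :=
    HopfAlgebra.sum_antipode_mul_eq_smul (mulRepr (ℛ ℂ x) (ℛ ℂ y))
  rw [Bialgebra.counit_mul] at h2
  calc (∑ m ∈ (ℛ ℂ x).index, ∑ n ∈ (ℛ ℂ y).index,
        S ((ℛ ℂ x).left m * (ℛ ℂ y).left n) * ((ℛ ℂ x).right m * (ℛ ℂ y).right n))
      = ∑ p ∈ (ℛ ℂ x).index ×ˢ (ℛ ℂ y).index,
        S ((ℛ ℂ x).left p.1 * (ℛ ℂ y).left p.2) * ((ℛ ℂ x).right p.1 * (ℛ ℂ y).right p.2) :=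
        (Finset.sum_product (ℛ ℂ x).index (ℛ ℂ y).index (fun p =>
          S ((ℛ ℂ x).left p.1 * (ℛ ℂ y).left p.2) *
            ((ℛ ℂ x).right p.1 * (ℛ ℂ y).right p.2))).symm
    _ = (ε x * ε y) • (1 : A) := h2

/-- The 4-linear evaluation `(x ⊗ (y ⊗ z)) ⊗ (p ⊗ (q ⊗ r)) ↦ S(xp) * ((yq) * (S r * S z))`. -/
noncomputable def bigMap : (A ⊗[ℂ] (A ⊗[ℂ] A)) ⊗[ℂ] (A ⊗[ℂ] (A ⊗[ℂ] A)) →ₗ[ℂ] A :=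
  (LinearMap.mul' ℂ A)
    ∘ₗ (TensorProduct.map
          ((HopfAlgebra.antipode (R := ℂ)) ∘ₗ LinearMap.mul' ℂ A)
          ((LinearMap.mul' ℂ A)
            ∘ₗ (TensorProduct.map (LinearMap.mul' ℂ A)
                 ((LinearMap.mul' ℂ A)
                   ∘ₗ (TensorProduct.map (HopfAlgebra.antipode (R := ℂ))
                        (HopfAlgebra.antipode (R := ℂ)))
                   ∘ₗ (TensorProduct.comm ℂ A A).toLinearMap))
            ∘ₗ (tensorTensorTensorComm ℂ A A A A).toLinearMap))
    ∘ₗ (tensorTensorTensorComm ℂ A (A ⊗[ℂ] A) A (A ⊗[ℂ] A)).toLinearMap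

@[simp] lemma bigMap_tmul (x y z p q r : A) :
    bigMap ((x ⊗ₜ[ℂ] (y ⊗ₜ[ℂ] z)) ⊗ₜ[ℂ] (p ⊗ₜ[ℂ] (q ⊗ₜ[ℂ] r))) =
      S (x * p) * ((y * q) * (S r * S z)) := by
  simp [bigMap, tensorTensorTensorComm_tmul, LinearMap.mul'_apply]

lemma eps_eps_smul_one (x y : A) :
    (∑ k ∈ (ℛ ℂ x).index, ∑ l ∈ (ℛ ℂ y).index,
      ((ℛ ℂ x).left k * (ℛ ℂ y).left l) *
        (S ((ℛ ℂ y).right l) * S ((ℛ ℂ x).right k)))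
    = (ε x * ε y) • (1 : A) := by
  have step : ∀ k ∈ (ℛ ℂ x).index,
      (∑ l ∈ (ℛ ℂ y).index, ((ℛ ℂ x).left k * (ℛ ℂ y).left l) *
        (S ((ℛ ℂ y).right l) * S ((ℛ ℂ x).right k)))
      = ε y • ((ℛ ℂ x).left k * S ((ℛ ℂ x).right k)) := by
    intro k _
    have : ∀ l ∈ (ℛ ℂ y).index,
        ((ℛ ℂ x).left k * (ℛ ℂ y).left l) * (S ((ℛ ℂ y).right l) * S ((ℛ ℂ x).right k))
        = (ℛ ℂ x).left k * (((ℛ ℂ y).left l * S ((ℛ ℂ y).right l)) * S ((ℛ ℂ x).right k)) := by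
      intro l _
      simp only [mul_assoc]
    rw [Finset.sum_congr rfl this, ← Finset.mul_sum, ← Finset.sum_mul,
      HopfAlgebra.sum_mul_antipode_eq_smul (ℛ ℂ y)]
    rw [smul_mul_assoc, one_mul, mul_smul_comm]
  rw [Finset.sum_congr rfl step, ← Finset.smul_sum,
    HopfAlgebra.sum_mul_antipode_eq_smul (ℛ ℂ x), smul_smul, mul_comm]

lemma bigMap_expand {ι₁ ι₂ : Type*} {κ₁ : ι₁ → Type*} {κ₂ : ι₂ → Type*}
    (s₁ : Finset ι₁) (s₂ : Finset ι₂) (t₁ : ∀ i, Finset (κ₁ i)) (t₂ : ∀ j, Finset (κ₂ j))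
    (U : ∀ i, κ₁ i → A ⊗[ℂ] (A ⊗[ℂ] A)) (V : ∀ j, κ₂ j → A ⊗[ℂ] (A ⊗[ℂ] A)) :
    bigMap (A := A) ((∑ i ∈ s₁, ∑ k ∈ t₁ i, U i k) ⊗ₜ[ℂ] (∑ j ∈ s₂, ∑ l ∈ t₂ j, V j l))
    = ∑ i ∈ s₁, ∑ k ∈ t₁ i, ∑ j ∈ s₂, ∑ l ∈ t₂ j, bigMap (U i k ⊗ₜ[ℂ] V j l) := by
  rw [sum_tmul, map_sum]
  refine Finset.sum_congr rfl fun i _ => ?_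
  rw [sum_tmul, map_sum]
  refine Finset.sum_congr rfl fun k _ => ?_
  rw [tmul_sum, map_sum]
  refine Finset.sum_congr rfl fun j _ => ?_
  rw [tmul_sum, map_sum]

lemma antipode_mul_rev (a b : A) : S (a * b) = S b * S a := by
  calc S (a * b)
      = ∑ i ∈ (ℛ ℂ a).index, ∑ j ∈ (ℛ ℂ b).index,
          (ε ((ℛ ℂ a).right i) * ε ((ℛ ℂ b).right j)) •
            S ((ℛ ℂ a).left i * (ℛ ℂ b).left j) := by
        rw [← prod_counit_collapse (x := a) (y := b) (HopfAlgebra.antipode (R := ℂ))]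
        exact Finset.sum_congr rfl fun i _ => Finset.sum_congr rfl fun j _ => by
          rw [Bialgebra.counit_mul]
    _ = ∑ i ∈ (ℛ ℂ a).index, ∑ j ∈ (ℛ ℂ b).index,
          ∑ k ∈ (ℛ ℂ ((ℛ ℂ a).right i)).index, ∑ l ∈ (ℛ ℂ ((ℛ ℂ b).right j)).index,
          bigMap (((ℛ ℂ a).left i ⊗ₜ[ℂ]
              ((ℛ ℂ ((ℛ ℂ a).right i)).left k ⊗ₜ[ℂ] (ℛ ℂ ((ℛ ℂ a).right i)).right k)) ⊗ₜ[ℂ]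
            ((ℛ ℂ b).left j ⊗ₜ[ℂ]
              ((ℛ ℂ ((ℛ ℂ b).right j)).left l ⊗ₜ[ℂ] (ℛ ℂ ((ℛ ℂ b).right j)).right l))) := by
        refine Finset.sum_congr rfl fun i _ => Finset.sum_congr rfl fun j _ => Eq.symm ?_
        simp only [bigMap_tmul, ← Finset.mul_sum]
        rw [eps_eps_smul_one, mul_smul_comm, mul_one]
    _ = ∑ i ∈ (ℛ ℂ a).index, ∑ k ∈ (ℛ ℂ ((ℛ ℂ a).right i)).index,
          ∑ j ∈ (ℛ ℂ b).index, ∑ l ∈ (ℛ ℂ ((ℛ ℂ b).right j)).index,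
          bigMap (((ℛ ℂ a).left i ⊗ₜ[ℂ]
              ((ℛ ℂ ((ℛ ℂ a).right i)).left k ⊗ₜ[ℂ] (ℛ ℂ ((ℛ ℂ a).right i)).right k)) ⊗ₜ[ℂ]
            ((ℛ ℂ b).left j ⊗ₜ[ℂ]
              ((ℛ ℂ ((ℛ ℂ b).right j)).left l ⊗ₜ[ℂ] (ℛ ℂ ((ℛ ℂ b).right j)).right l))) :=
        Finset.sum_congr rfl fun i _ => Finset.sum_comm
    _ = bigMap ((∑ i ∈ (ℛ ℂ a).index, ∑ k ∈ (ℛ ℂ ((ℛ ℂ a).right i)).index,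
            (ℛ ℂ a).left i ⊗ₜ[ℂ]
              ((ℛ ℂ ((ℛ ℂ a).right i)).left k ⊗ₜ[ℂ] (ℛ ℂ ((ℛ ℂ a).right i)).right k)) ⊗ₜ[ℂ]
          (∑ j ∈ (ℛ ℂ b).index, ∑ l ∈ (ℛ ℂ ((ℛ ℂ b).right j)).index,
            (ℛ ℂ b).left j ⊗ₜ[ℂ]
              ((ℛ ℂ ((ℛ ℂ b).right j)).left l ⊗ₜ[ℂ] (ℛ ℂ ((ℛ ℂ b).right j)).right l))) :=
        (bigMap_expand _ _ _ _ _ _).symm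
    _ = bigMap ((∑ i ∈ (ℛ ℂ a).index, ∑ m ∈ (ℛ ℂ ((ℛ ℂ a).left i)).index,
            (ℛ ℂ ((ℛ ℂ a).left i)).left m ⊗ₜ[ℂ]
              ((ℛ ℂ ((ℛ ℂ a).left i)).right m ⊗ₜ[ℂ] (ℛ ℂ a).right i)) ⊗ₜ[ℂ]
          (∑ j ∈ (ℛ ℂ b).index, ∑ n ∈ (ℛ ℂ ((ℛ ℂ b).left j)).index,
            (ℛ ℂ ((ℛ ℂ b).left j)).left n ⊗ₜ[ℂ]
              ((ℛ ℂ ((ℛ ℂ b).left j)).right n ⊗ₜ[ℂ] (ℛ ℂ b).right j))) := by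
        rw [coassoc_repr a, coassoc_repr b]
    _ = ∑ i ∈ (ℛ ℂ a).index, ∑ m ∈ (ℛ ℂ ((ℛ ℂ a).left i)).index,
          ∑ j ∈ (ℛ ℂ b).index, ∑ n ∈ (ℛ ℂ ((ℛ ℂ b).left j)).index,
          S ((ℛ ℂ ((ℛ ℂ a).left i)).left m * (ℛ ℂ ((ℛ ℂ b).left j)).left n) *
            (((ℛ ℂ ((ℛ ℂ a).left i)).right m * (ℛ ℂ ((ℛ ℂ b).left j)).right n) *
              (S ((ℛ ℂ b).right j) * S ((ℛ ℂ a).right i))) := by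
        rw [bigMap_expand]
        exact Finset.sum_congr rfl fun i _ => Finset.sum_congr rfl fun m _ =>
          Finset.sum_congr rfl fun j _ => Finset.sum_congr rfl fun n _ => bigMap_tmul _ _ _ _ _ _
    _ = ∑ i ∈ (ℛ ℂ a).index, ∑ j ∈ (ℛ ℂ b).index,
          ε ((ℛ ℂ a).left i) • (ε ((ℛ ℂ b).left j) •
            (S ((ℛ ℂ b).right j) * S ((ℛ ℂ a).right i))) := by
        refine Finset.sum_congr rfl fun i _ => ?_
        rw [Finset.sum_comm]
        refine Finset.sum_congr rfl fun j _ => ?_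
        have hcol := prod_antipode_collapse ((ℛ ℂ a).left i) ((ℛ ℂ b).left j)
        calc (∑ m ∈ (ℛ ℂ ((ℛ ℂ a).left i)).index, ∑ n ∈ (ℛ ℂ ((ℛ ℂ b).left j)).index,
              S ((ℛ ℂ ((ℛ ℂ a).left i)).left m * (ℛ ℂ ((ℛ ℂ b).left j)).left n) *
                (((ℛ ℂ ((ℛ ℂ a).left i)).right m * (ℛ ℂ ((ℛ ℂ b).left j)).right n) *
                  (S ((ℛ ℂ b).right j) * S ((ℛ ℂ a).right i))))
            = (∑ m ∈ (ℛ ℂ ((ℛ ℂ a).left i)).index, ∑ n ∈ (ℛ ℂ ((ℛ ℂ b).left j)).index,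
              S ((ℛ ℂ ((ℛ ℂ a).left i)).left m * (ℛ ℂ ((ℛ ℂ b).left j)).left n) *
                ((ℛ ℂ ((ℛ ℂ a).left i)).right m * (ℛ ℂ ((ℛ ℂ b).left j)).right n)) *
                  (S ((ℛ ℂ b).right j) * S ((ℛ ℂ a).right i)) := by
              rw [Finset.sum_mul]
              refine Finset.sum_congr rfl fun m _ => ?_
              rw [Finset.sum_mul]
              exact Finset.sum_congr rfl fun n _ => (mul_assoc _ _ _).symm
          _ = ε ((ℛ ℂ a).left i) • (ε ((ℛ ℂ b).left j) •
                (S ((ℛ ℂ b).right j) * S ((ℛ ℂ a).right i))) := by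
              rw [hcol, smul_mul_assoc, one_mul, mul_smul]
    _ = S b * S a := by
        have inner : ∀ i, (∑ j ∈ (ℛ ℂ b).index, ε ((ℛ ℂ b).left j) •
            (S ((ℛ ℂ b).right j) * S ((ℛ ℂ a).right i))) = S b * S ((ℛ ℂ a).right i) := by
          intro i
          exact repr_smul_counit_left (ℛ ℂ b)
            ((LinearMap.mulRight ℂ (S ((ℛ ℂ a).right i))) ∘ₗ (HopfAlgebra.antipode (R := ℂ)))
        calc (∑ i ∈ (ℛ ℂ a).index, ∑ j ∈ (ℛ ℂ b).index,
              ε ((ℛ ℂ a).left i) • (ε ((ℛ ℂ b).left j) •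
                (S ((ℛ ℂ b).right j) * S ((ℛ ℂ a).right i))))
            = ∑ i ∈ (ℛ ℂ a).index, ε ((ℛ ℂ a).left i) • (S b * S ((ℛ ℂ a).right i)) := by
              refine Finset.sum_congr rfl fun i _ => ?_
              rw [← Finset.smul_sum, inner i]
          _ = S b * S a :=
              repr_smul_counit_left (ℛ ℂ a)
                ((LinearMap.mulLeft ℂ (S b)) ∘ₗ (HopfAlgebra.antipode (R := ℂ)))

lemma ad_repr (c : A) {ι κ : Type*} (r : Coalgebra.Repr ℂ c ι)
    (s : ∀ i : ι, Coalgebra.Repr ℂ (r.left i) κ) :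
    adjointCoaction A c = ∑ i ∈ r.index, ∑ m ∈ (s i).index,
      (s i).right m ⊗ₜ[ℂ] (S ((s i).left m) * r.right i) := by
  rw [adjointCoaction]
  simp only [LinearMap.comp_apply]
  rw [← r.eq]
  simp only [map_sum, TensorProduct.map_tmul, LinearMap.id_coe, id_eq]
  refine Finset.sum_congr rfl fun i _ => ?_
  rw [← (s i).eq]
  simp only [map_sum, sum_tmul, TensorProduct.map_tmul, comm_tmul, assoc_tmul,
    LinearMap.id_coe, id_eq, LinearMap.mul'_apply, LinearMap.comp_apply,
    LinearEquiv.coe_coe]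

lemma adG_repr (X : A →ₗ[ℂ] ℂ) (c : A) {ι κ : Type*} (r : Coalgebra.Repr ℂ c ι)
    (s : ∀ i : ι, Coalgebra.Repr ℂ (r.left i) κ) :
    (TensorProduct.lid ℂ A).toLinearMap
        ((TensorProduct.map X LinearMap.id) (adjointCoaction A c))
    = ∑ i ∈ r.index, ∑ m ∈ (s i).index,
        X ((s i).right m) • (S ((s i).left m) * r.right i) := by
  rw [ad_repr c r s]
  simp only [map_sum, TensorProduct.map_tmul, LinearMap.id_coe, id_eq,
    LinearEquiv.coe_toLinearMap, TensorProduct.lid_tmul]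

end Aux

section Main

variable {A : Type*} [Ring A] [HopfAlgebra ℂ A]

local notation "ε" => Coalgebra.counit (R := ℂ)
local notation "S" => HopfAlgebra.antipode (R := ℂ) (A := A)

lemma mul_mem_aux {a : A} (b : A) (X : A →ₗ[ℂ] ℂ) (hXd : IsEpsDerivation X)
    (ha1 : ε a = 0)
    (ha2 : (TensorProduct.lid ℂ A).toLinearMap
      ((TensorProduct.map X LinearMap.id) (adjointCoaction A a)) = 0) :
    (TensorProduct.lid ℂ A).toLinearMap
      ((TensorProduct.map X LinearMap.id) (adjointCoaction A (a * b))) = 0 := by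
  -- the key vanishing sums on the `a`-side
  have key1 : (∑ i ∈ (ℛ ℂ a).index, ∑ m ∈ (ℛ ℂ ((ℛ ℂ a).left i)).index,
      ε ((ℛ ℂ ((ℛ ℂ a).left i)).right m) •
        (S ((ℛ ℂ ((ℛ ℂ a).left i)).left m) * (ℛ ℂ a).right i)) = 0 := by
    have inner : ∀ i ∈ (ℛ ℂ a).index, (∑ m ∈ (ℛ ℂ ((ℛ ℂ a).left i)).index,
        ε ((ℛ ℂ ((ℛ ℂ a).left i)).right m) •
          (S ((ℛ ℂ ((ℛ ℂ a).left i)).left m) * (ℛ ℂ a).right i))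
        = S ((ℛ ℂ a).left i) * (ℛ ℂ a).right i := fun i _ =>
      repr_smul_counit_right (ℛ ℂ ((ℛ ℂ a).left i))
        ((LinearMap.mulRight ℂ ((ℛ ℂ a).right i)) ∘ₗ (HopfAlgebra.antipode (R := ℂ)))
    rw [Finset.sum_congr rfl inner, HopfAlgebra.sum_antipode_mul_eq_smul (ℛ ℂ a), ha1,
      zero_smul]
  have key2 : (∑ i ∈ (ℛ ℂ a).index, ∑ m ∈ (ℛ ℂ ((ℛ ℂ a).left i)).index,
      X ((ℛ ℂ ((ℛ ℂ a).left i)).right m) •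
        (S ((ℛ ℂ ((ℛ ℂ a).left i)).left m) * (ℛ ℂ a).right i)) = 0 := by
    rw [← adG_repr X a (ℛ ℂ a) (fun i => ℛ ℂ ((ℛ ℂ a).left i))]
    exact ha2
  -- expand `G(ab)` into the four-fold sum
  have h0 : (TensorProduct.lid ℂ A).toLinearMap
      ((TensorProduct.map X LinearMap.id) (adjointCoaction A (a * b)))
      = ∑ p ∈ (ℛ ℂ a).index ×ˢ (ℛ ℂ b).index,
          ∑ w ∈ (ℛ ℂ ((ℛ ℂ a).left p.1)).index ×ˢ (ℛ ℂ ((ℛ ℂ b).left p.2)).index,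
          X ((ℛ ℂ ((ℛ ℂ a).left p.1)).right w.1 * (ℛ ℂ ((ℛ ℂ b).left p.2)).right w.2) •
            (S ((ℛ ℂ ((ℛ ℂ a).left p.1)).left w.1 * (ℛ ℂ ((ℛ ℂ b).left p.2)).left w.2) *
              ((ℛ ℂ a).right p.1 * (ℛ ℂ b).right p.2)) :=
    adG_repr X (a * b) (mulRepr (ℛ ℂ a) (ℛ ℂ b))
      (fun p => mulRepr (ℛ ℂ ((ℛ ℂ a).left p.1)) (ℛ ℂ ((ℛ ℂ b).left p.2)))
  rw [h0]
  -- convert to an iterated sum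
  rw [Finset.sum_product (ℛ ℂ a).index (ℛ ℂ b).index (fun p =>
      ∑ w ∈ (ℛ ℂ ((ℛ ℂ a).left p.1)).index ×ˢ (ℛ ℂ ((ℛ ℂ b).left p.2)).index,
      X ((ℛ ℂ ((ℛ ℂ a).left p.1)).right w.1 * (ℛ ℂ ((ℛ ℂ b).left p.2)).right w.2) •
        (S ((ℛ ℂ ((ℛ ℂ a).left p.1)).left w.1 * (ℛ ℂ ((ℛ ℂ b).left p.2)).left w.2) *
          ((ℛ ℂ a).right p.1 * (ℛ ℂ b).right p.2)))]
  have hsplit : ∀ i ∈ (ℛ ℂ a).index, ∀ j ∈ (ℛ ℂ b).index,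
      (∑ w ∈ (ℛ ℂ ((ℛ ℂ a).left i)).index ×ˢ (ℛ ℂ ((ℛ ℂ b).left j)).index,
        X ((ℛ ℂ ((ℛ ℂ a).left i)).right w.1 * (ℛ ℂ ((ℛ ℂ b).left j)).right w.2) •
          (S ((ℛ ℂ ((ℛ ℂ a).left i)).left w.1 * (ℛ ℂ ((ℛ ℂ b).left j)).left w.2) *
            ((ℛ ℂ a).right i * (ℛ ℂ b).right j)))
      = ∑ m ∈ (ℛ ℂ ((ℛ ℂ a).left i)).index, ∑ n ∈ (ℛ ℂ ((ℛ ℂ b).left j)).index,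
        (X ((ℛ ℂ ((ℛ ℂ b).left j)).right n) •
            ((S ((ℛ ℂ ((ℛ ℂ b).left j)).left n) *
                (ε ((ℛ ℂ ((ℛ ℂ a).left i)).right m) •
                  (S ((ℛ ℂ ((ℛ ℂ a).left i)).left m) * (ℛ ℂ a).right i))) * (ℛ ℂ b).right j)
          + ε ((ℛ ℂ ((ℛ ℂ b).left j)).right n) •
            ((S ((ℛ ℂ ((ℛ ℂ b).left j)).left n) *
                (X ((ℛ ℂ ((ℛ ℂ a).left i)).right m) •
                  (S ((ℛ ℂ ((ℛ ℂ a).left i)).left m) * (ℛ ℂ a).right i))) * (ℛ ℂ b).right j)) := by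
    intro i _ j _
    rw [Finset.sum_product (ℛ ℂ ((ℛ ℂ a).left i)).index (ℛ ℂ ((ℛ ℂ b).left j)).index (fun w =>
      X ((ℛ ℂ ((ℛ ℂ a).left i)).right w.1 * (ℛ ℂ ((ℛ ℂ b).left j)).right w.2) •
        (S ((ℛ ℂ ((ℛ ℂ a).left i)).left w.1 * (ℛ ℂ ((ℛ ℂ b).left j)).left w.2) *
          ((ℛ ℂ a).right i * (ℛ ℂ b).right j)))]
    refine Finset.sum_congr rfl fun m _ => Finset.sum_congr rfl fun n _ => ?_
    rw [hXd, antipode_mul_rev, add_smul]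
    congr 1
    · simp only [smul_smul, mul_smul_comm, smul_mul_assoc, mul_assoc]
      rw [mul_comm (ε _) (X _)]
    · simp only [smul_smul, mul_smul_comm, smul_mul_assoc, mul_assoc]
  rw [Finset.sum_congr rfl (fun i hi => Finset.sum_congr rfl (fun j hj => hsplit i hi j hj))]
  simp only [Finset.sum_add_distrib]
  -- two linear "multiplier" maps collecting the (j, n)-data
  have factor : ∀ (α : (j : A × A) → A × A → ℂ)
      (u : (i : A × A) → A × A → A),
      (∑ i ∈ (ℛ ℂ a).index, ∑ m ∈ (ℛ ℂ ((ℛ ℂ a).left i)).index, u i m = 0) →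
      (∑ i ∈ (ℛ ℂ a).index, ∑ j ∈ (ℛ ℂ b).index,
        ∑ m ∈ (ℛ ℂ ((ℛ ℂ a).left i)).index, ∑ n ∈ (ℛ ℂ ((ℛ ℂ b).left j)).index,
          α j n • ((S ((ℛ ℂ ((ℛ ℂ b).left j)).left n) * u i m) * (ℛ ℂ b).right j)) = 0 := by
    intro α u hu
    set Ψ : A →ₗ[ℂ] A := ∑ j ∈ (ℛ ℂ b).index, ∑ n ∈ (ℛ ℂ ((ℛ ℂ b).left j)).index,
        α j n • ((LinearMap.mulRight ℂ ((ℛ ℂ b).right j)) ∘ₗ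
          (LinearMap.mulLeft ℂ (S ((ℛ ℂ ((ℛ ℂ b).left j)).left n)))) with hΨ
    have happ : ∀ z : A, (∑ j ∈ (ℛ ℂ b).index, ∑ n ∈ (ℛ ℂ ((ℛ ℂ b).left j)).index,
        α j n • ((S ((ℛ ℂ ((ℛ ℂ b).left j)).left n) * z) * (ℛ ℂ b).right j)) = Ψ z := by
      intro z
      rw [hΨ]
      simp only [LinearMap.coe_sum, Finset.sum_apply, LinearMap.smul_apply,
        LinearMap.comp_apply, LinearMap.mulLeft_apply, LinearMap.mulRight_apply]
    calc (∑ i ∈ (ℛ ℂ a).index, ∑ j ∈ (ℛ ℂ b).index,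
          ∑ m ∈ (ℛ ℂ ((ℛ ℂ a).left i)).index, ∑ n ∈ (ℛ ℂ ((ℛ ℂ b).left j)).index,
          α j n • ((S ((ℛ ℂ ((ℛ ℂ b).left j)).left n) * u i m) * (ℛ ℂ b).right j))
        = ∑ i ∈ (ℛ ℂ a).index, ∑ m ∈ (ℛ ℂ ((ℛ ℂ a).left i)).index, Ψ (u i m) := by
          refine Finset.sum_congr rfl fun i _ => ?_
          rw [Finset.sum_comm]
          exact Finset.sum_congr rfl fun m _ => happ (u i m)
      _ = Ψ (∑ i ∈ (ℛ ℂ a).index, ∑ m ∈ (ℛ ℂ ((ℛ ℂ a).left i)).index, u i m) := by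
          rw [map_sum]
          exact Finset.sum_congr rfl fun i _ => (map_sum Ψ _ _).symm
      _ = 0 := by rw [hu, map_zero]
  rw [show (0 : A) = 0 + 0 by rw [add_zero]]
  congr 1
  · exact factor (fun j n => X ((ℛ ℂ ((ℛ ℂ b).left j)).right n))
      (fun i m => ε ((ℛ ℂ ((ℛ ℂ a).left i)).right m) •
        (S ((ℛ ℂ ((ℛ ℂ a).left i)).left m) * (ℛ ℂ a).right i)) key1
  · exact factor (fun j n => ε ((ℛ ℂ ((ℛ ℂ b).left j)).right n))
      (fun i m => X ((ℛ ℂ ((ℛ ℂ a).left i)).right m) •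
        (S ((ℛ ℂ ((ℛ ℂ a).left i)).left m) * (ℛ ℂ a).right i)) key2

end Main

/-- Let `R₀ ⊆ ker ε` be a right ideal and `L` a set of ε-derivations. Then
`𝓡̂ = {a ∈ ker ε : (X ⊗ id)(ad(a)) = 0 for all X ∈ L}` is a right ideal of `A`
contained in `ker ε`: it contains `0`, is closed under addition, scalar
multiplication and right multiplication by arbitrary elements of `A`. -/
theorem Rhat_is_right_ideal {A : Type*} [Ring A] [HopfAlgebra ℂ A]
    (L : Set (A →ₗ[ℂ] ℂ)) (hL : ∀ X ∈ L, IsEpsDerivation X)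
    (R₀ : Submodule ℂ A) (hR₀ker : ∀ a ∈ R₀, Coalgebra.counit (R := ℂ) a = 0)
    (hR₀ideal : ∀ a ∈ R₀, ∀ b : A, a * b ∈ R₀)
    (Rhat : Set A)
    (hRhat : Rhat = {a : A | Coalgebra.counit (R := ℂ) a = 0 ∧
      ∀ X ∈ L, (TensorProduct.lid ℂ A).toLinearMap
        ((TensorProduct.map X LinearMap.id) (adjointCoaction A a)) = 0}) :
    (∀ a ∈ Rhat, Coalgebra.counit (R := ℂ) a = 0) ∧
    (0 : A) ∈ Rhat ∧
    (∀ a b : A, a ∈ Rhat → b ∈ Rhat → a + b ∈ Rhat) ∧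
    (∀ (c : ℂ) (a : A), a ∈ Rhat → c • a ∈ Rhat) ∧
    (∀ a ∈ Rhat, ∀ b : A, a * b ∈ Rhat) := by
  subst hRhat
  refine ⟨fun a ha => ha.1, ⟨map_zero _, fun X _ => by simp⟩, ?_, ?_, ?_⟩
  · intro a b ha hb
    refine ⟨by rw [map_add, ha.1, hb.1, add_zero], fun X hX => ?_⟩
    rw [map_add, map_add, map_add, ha.2 X hX, hb.2 X hX, add_zero]
  · intro c a ha
    refine ⟨by rw [map_smul, ha.1, smul_zero], fun X hX => ?_⟩
    rw [map_smul, map_smul, map_smul, ha.2 X hX, smul_zero]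
  · intro a ha b
    exact ⟨by rw [Bialgebra.counit_mul, ha.1, zero_mul],
      fun X hX => mul_mem_aux b X (hL X hX) ha.1 (ha.2 X hX)⟩
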